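/- Let H = (V, ℰ) be an acyclic hypergraph. Then H has a unique join tree if and only if the union join graph of H is a tree. -/

import Mathlib

open SimpleGraph


lemma my_le_eq {ι : Type*} {T U : SimpleGraph ι} (h : T ≤ U)
    (hc : T.Connected) (ha : U.IsAcyclic) : T = U := by
  ext i j
  constructor
  · exact fun hij => h hij
  · intro hij
    classical
    obtain ⟨⟨p, hp⟩⟩ : Nonempty (T.Path i j) := ⟨((hc i j).some).toPath⟩
    have key := isAcyclic_iff_path_unique.mp ha ⟨p.mapLe h, hp.mapLe h⟩ (Path.singleton hij)
    have : s(i, j) ∈ (p.mapLe h).edges := by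
      rw [show p.mapLe h = (Path.singleton hij).val from congrArg Subtype.val key]
      simp [Path.singleton]
    have : s(i, j) ∈ p.edges := by
      simpa [Walk.mapLe] using this
    exact p.edges_subset_edgeSet this


/-- `T` is a join tree for the hypergraph whose hyperedge family is `E` (indexed by `ι`):
`T` is a tree on the hyperedges and, for every vertex `v`, the hyperedges containing `v`
induce a connected (nonempty sets being preconnected) subgraph of `T`. -/
def IsJoinTree {V ι : Type*} (E : ι → Finset V) (T : SimpleGraph ι) : Prop :=
  T.IsTree ∧ ∀ v : V, (T.induce {i | v ∈ E i}).Preconnected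

/-- A hypergraph is acyclic if it admits a join tree. -/
def IsAcyclicHG {V ι : Type*} (E : ι → Finset V) : Prop :=
  ∃ T : SimpleGraph ι, IsJoinTree E T
/-- The union join graph of a hypergraph: two hyperedges are adjacent iff some join tree
of the hypergraph contains the edge between them. -/
def unionJoinGraph {V ι : Type*} (E : ι → Finset V) : SimpleGraph ι where
  Adj i j := ∃ T : SimpleGraph ι, IsJoinTree E T ∧ T.Adj i j
  symm := by
    constructor
    rintro i j ⟨T, hT, h⟩
    exact ⟨T, hT, h.symm⟩
  loopless := by
    constructor
    rintro i ⟨T, _, h⟩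
    exact T.irrefl h

/-- An acyclic hypergraph `H` has a unique join tree iff its union
join graph is a tree. -/
theorem stmt19 {V ι : Type*} [Fintype V] [Fintype ι] [DecidableEq V]
    (E : ι → Finset V)
    (hne : ∀ i, (E i).Nonempty) (hcov : ∀ v, ∃ i, v ∈ E i)
    (hacyclic : IsAcyclicHG E) :
    (∃! T : SimpleGraph ι, IsJoinTree E T) ↔ (unionJoinGraph E).IsTree := by
  constructor
  · rintro ⟨T, hT, huniq⟩
    have : unionJoinGraph E = T := by
      ext i j
      constructor
      · rintro ⟨T', hT', hadj⟩
        rwa [huniq T' hT'] at hadj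
      · exact fun hadj => ⟨T, hT, hadj⟩
    rw [this]
    exact hT.1
  · intro h
    obtain ⟨T, hT⟩ := hacyclic
    have key : ∀ T' : SimpleGraph ι, IsJoinTree E T' → T' = unionJoinGraph E := by
      intro T' hT'
      exact my_le_eq (fun i j hadj => ⟨T', hT', hadj⟩) hT'.1.1 h.2
    exact ⟨T, hT, fun T' hT' => (key T' hT').trans (key T hT).symm⟩
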